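/- Assume Condition (*) holds for M. Then for every s ≤ s*(λ,μ) one has E[e^{s A_x}] = G_M(log G₀(s;λ,μ))·e^{xΛ(s;λ,μ)} (an equality in (0,∞]), and for every s > s*(λ,μ) one has E[e^{s A_x}] = ∞. -/

import Mathlib

open MeasureTheory ProbabilityTheory Filter

/-- Product of independent nonnegative functions splits the lintegral. -/
lemma lintegral_prod_of_iIndepFun' {Ω : Type*} [MeasurableSpace Ω] {μ : Measure Ω}
    [IsProbabilityMeasure μ] {X : ℕ → Ω → ℝ} (hX : ∀ i, Measurable (X i))
    (hInd : iIndepFun X μ)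
    (g : ℕ → ℝ → ENNReal) (hg : ∀ i, Measurable (g i)) (S : Finset ℕ) :
    ∫⁻ ω, ∏ j ∈ S, g j (X j ω) ∂μ = ∏ j ∈ S, ∫⁻ ω, g j (X j ω) ∂μ := by
  classical
  induction S using Finset.induction_on with
  | empty => simp
  | @insert i S hi ih =>
    have hdisj : Disjoint ({i} : Finset ℕ) S := Finset.disjoint_singleton_left.mpr hi
    have hIF := hInd.indepFun_finset {i} S hdisj hX
    set φ : (({i} : Finset ℕ) → ℝ) → ENNReal :=
      fun v => g i (v ⟨i, Finset.mem_singleton_self i⟩) with hφ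
    set ψ : (↥S → ℝ) → ENNReal :=
      fun v => ∏ j ∈ S.attach, g j.1 (v j) with hψ
    have hφm : Measurable φ := (hg i).comp (measurable_pi_apply _)
    have hψm : Measurable ψ :=
      Finset.measurable_prod _ fun j _ => (hg j.1).comp (measurable_pi_apply j)
    have hIndep : IndepFun (fun ω => g i (X i ω))
        (fun ω => ∏ j ∈ S, g j (X j ω)) μ := by
      have h2 := hIF.comp hφm hψm
      have e1 : (φ ∘ fun a (j : ({i} : Finset ℕ)) => X j a) = fun ω => g i (X i ω) := rfl
      have e2 : (ψ ∘ fun a (j : ↥S) => X j a)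
          = fun ω => ∏ j ∈ S, g j (X j ω) := by
        funext ω
        simp only [Function.comp, hψ]
        rw [← Finset.prod_attach S (fun j => g j (X j ω))]
      rwa [e1, e2] at h2
    have hm1 : Measurable fun ω => g i (X i ω) := (hg i).comp (hX i)
    have hm2 : Measurable fun ω => ∏ j ∈ S, g j (X j ω) :=
      Finset.measurable_prod _ fun j _ => (hg j).comp (hX j)
    rw [Finset.prod_insert hi]
    calc ∫⁻ ω, ∏ j ∈ insert i S, g j (X j ω) ∂μ
        = ∫⁻ ω, g i (X i ω) * ∏ j ∈ S, g j (X j ω) ∂μ := by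
          simp_rw [Finset.prod_insert hi]
      _ = (∫⁻ ω, g i (X i ω) ∂μ) * ∫⁻ ω, ∏ j ∈ S, g j (X j ω) ∂μ :=
          lintegral_mul_eq_lintegral_mul_lintegral_of_indepFun'' hm1.aemeasurable
            hm2.aemeasurable hIndep
      _ = (∫⁻ ω, g i (X i ω) ∂μ) * ∏ j ∈ S, ∫⁻ ω, g j (X j ω) ∂μ := by rw [ih]

/-- `s*(λ,μ) = (√λ − √μ)²/2`. -/
noncomputable def sStar (l m : ℝ) : ℝ := (Real.sqrt l - Real.sqrt m) ^ 2 / 2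

/-- `G₀(s;λ,μ)`. -/
noncomputable def Gzero (s l m : ℝ) : ℝ :=
  (l + m - 2 * s - Real.sqrt ((l + m - 2 * s) ^ 2 - 4 * l * m)) / (2 * m)

/-- `Λ(s;λ,μ)`. -/
noncomputable def Lam (s l m : ℝ) : ℝ :=
  (l - m - Real.sqrt ((l + m - 2 * s) ^ 2 - 4 * l * m)) / 2

lemma Gzero_pos {s l m : ℝ} (hm : 0 < m) (hlm : m < l) (hs : s ≤ sStar l m) :
    0 < Gzero s l m := by
  have hl0 : (0:ℝ) < l := hm.trans hlm
  have hsq : (Real.sqrt l - Real.sqrt m) ^ 2 = l + m - 2 * Real.sqrt (l * m) := by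
    rw [sub_sq, Real.sq_sqrt hl0.le, Real.sq_sqrt hm.le, Real.sqrt_mul hl0.le]
    ring
  have hsqpos : 0 < Real.sqrt (l * m) := Real.sqrt_pos.mpr (by positivity)
  have ha : 2 * Real.sqrt (l * m) ≤ l + m - 2 * s := by
    have h2 : 2 * s ≤ (Real.sqrt l - Real.sqrt m) ^ 2 := by
      unfold sStar at hs; linarith
    rw [hsq] at h2; linarith
  have hapos : 0 < l + m - 2 * s := lt_of_lt_of_le (by linarith) ha
  have hlt : Real.sqrt ((l + m - 2 * s) ^ 2 - 4 * l * m) < l + m - 2 * s := by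
    rw [Real.sqrt_lt' hapos]; nlinarith
  exact div_pos (by linarith) (by linarith)

/-- Under Condition (*) for `M`, for every `s ≤ s*(λ,μ)` one has
`E[e^{s A_x}] = G_M(log G₀(s;λ,μ))·e^{xΛ(s;λ,μ)}` (in `(0,∞]`, i.e. in `ℝ≥0∞`), and
`E[e^{s A_x}] = ∞` for `s > s*(λ,μ)`, where `A_x = C + 1_{M>1}·Σ_{i=1}^{M−1} Cᵢ`. -/
theorem mgf_absorption_time
    {Ω : Type*} [MeasurableSpace Ω] (P : Measure Ω) [IsProbabilityMeasure P]
    (l m x : ℝ) (hlm : m < l) (hm : 0 < m) (hx : 0 < x)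
    (C : Ω → ℝ) (M : Ω → ℕ) (Cs : ℕ → Ω → ℝ)
    (hCmeas : Measurable C) (hMmeas : Measurable M) (hCsmeas : ∀ i, Measurable (Cs i))
    (hMpos : ∀ ω, 1 ≤ M ω)
    (hC_nonneg : ∀ ω, 0 ≤ C ω) (hCs_nonneg : ∀ i ω, 0 ≤ Cs i ω)
    (hident : ∀ i, P.map (Cs i) = P.map (Cs 0))
    (hindep : iIndepFun
      (fun i => if i = 0 then C else if i = 1 then (fun ω => (M ω : ℝ)) else Cs (i - 2)) P)
    -- mgf of the i.i.d. interarrival times C₀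
    (hCs_mgf_le : ∀ s ≤ sStar l m,
      ∫⁻ ω, ENNReal.ofReal (Real.exp (s * Cs 0 ω)) ∂P = ENNReal.ofReal (Gzero s l m))
    (hCs_mgf_gt : ∀ s > sStar l m,
      ∫⁻ ω, ENNReal.ofReal (Real.exp (s * Cs 0 ω)) ∂P = ⊤)
    -- mgf of the first-passage time C (= C_x)
    (hC_mgf_le : ∀ s ≤ sStar l m,
      ∫⁻ ω, ENNReal.ofReal (Real.exp (s * C ω)) ∂P
        = ENNReal.ofReal (Gzero s l m * Real.exp (x * Lam s l m)))
    (hC_mgf_gt : ∀ s > sStar l m,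
      ∫⁻ ω, ENNReal.ofReal (Real.exp (s * C ω)) ∂P = ⊤)
    -- Condition (*): G_M is finite at some positive point
    (hcond : ∃ r : ℝ, 0 < r ∧
      ∫⁻ ω, ENNReal.ofReal (Real.exp (r * (M ω : ℝ))) ∂P < ⊤) :
    (∀ s ≤ sStar l m,
      ∫⁻ ω, ENNReal.ofReal (Real.exp (s *
          (C ω + if 1 < M ω then ∑ i ∈ Finset.range (M ω - 1), Cs i ω else 0))) ∂P
        = (∫⁻ ω, ENNReal.ofReal (Real.exp (Real.log (Gzero s l m) * (M ω : ℝ))) ∂P)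
            * ENNReal.ofReal (Real.exp (x * Lam s l m)))
    ∧ (∀ s > sStar l m,
      ∫⁻ ω, ENNReal.ofReal (Real.exp (s *
          (C ω + if 1 < M ω then ∑ i ∈ Finset.range (M ω - 1), Cs i ω else 0))) ∂P = ⊤) := by
  classical
  constructor
  · -- case s ≤ s*
    intro s hs
    set G0 := Gzero s l m with hG0def
    have hG0pos : 0 < G0 := Gzero_pos hm hlm hs
    set E := Real.exp (x * Lam s l m) with hEdef
    have hEpos : 0 < E := Real.exp_pos _
    set X : ℕ → Ω → ℝ :=
      fun i => if i = 0 then C else if i = 1 then (fun ω => (M ω : ℝ)) else Cs (i - 2)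
      with hXdef
    have hMr : Measurable fun ω => (M ω : ℝ) := measurable_from_top.comp hMmeas
    have hXmeas : ∀ i, Measurable (X i) := by
      intro i
      rw [hXdef]
      dsimp only
      split_ifs with h1 h2
      · exact hCmeas
      · exact hMr
      · exact hCsmeas _
    set gE : ℝ → ENNReal := fun t => ENNReal.ofReal (Real.exp (s * t)) with hgEdef
    have hgEm : Measurable gE :=
      ENNReal.measurable_ofReal.comp (Real.measurable_exp.comp (measurable_id.const_mul s))
    set gI : ℕ → ℝ → ENNReal :=
      fun k t => Set.indicator {((k : ℕ) : ℝ)} (fun _ => (1 : ENNReal)) t with hgIdef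
    have hgIm : ∀ k, Measurable (gI k) :=
      fun k => measurable_const.indicator (measurableSet_singleton _)
    set g : ℕ → ℕ → ℝ → ENNReal := fun n j => if j = 1 then gI (n + 1) else gE with hgdef
    have hgm : ∀ n j, Measurable (g n j) := by
      intro n j; rw [hgdef]; dsimp only; split_ifs
      · exact hgIm _
      · exact hgEm
    -- measurable sets
    have hMset : ∀ n : ℕ, MeasurableSet {ω | M ω = n + 1} :=
      fun n => hMmeas (measurableSet_singleton (n + 1))
    -- factor integrals
    have hCsInt : ∀ i, ∫⁻ ω, gE (Cs i ω) ∂P = ENNReal.ofReal G0 := by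
      intro i
      rw [hgEdef]
      dsimp only
      rw [← lintegral_map (f := fun t => ENNReal.ofReal (Real.exp (s * t)))
        (by fun_prop) (hCsmeas i), hident i,
        lintegral_map (by fun_prop) (hCsmeas 0)]
      exact hCs_mgf_le s hs
    have hCInt : ∫⁻ ω, gE (C ω) ∂P = ENNReal.ofReal (G0 * E) := hC_mgf_le s hs
    have hIInt : ∀ n : ℕ, ∫⁻ ω, gI (n + 1) ((M ω : ℝ)) ∂P = P {ω | M ω = n + 1} := by
      intro n
      have hpt : ∀ ω, gI (n + 1) ((M ω : ℝ))
          = Set.indicator {ω' | M ω' = n + 1} (fun _ => (1 : ENNReal)) ω := by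
        intro ω
        by_cases h : M ω = n + 1
        · rw [Set.indicator_of_mem (show ω ∈ {ω' | M ω' = n + 1} from h), hgIdef]
          exact Set.indicator_of_mem (by simp only [Set.mem_singleton_iff]; exact_mod_cast h) _
        · rw [Set.indicator_of_notMem (show ω ∉ {ω' | M ω' = n + 1} from h), hgIdef]
          exact Set.indicator_of_notMem (by simp only [Set.mem_singleton_iff]; exact_mod_cast h) _
      simp_rw [hpt]
      rw [lintegral_indicator (hMset n)]
      simp
    -- key per-n computation
    have key : ∀ n : ℕ,
        ∫⁻ ω, Set.indicator {ω' | M ω' = n + 1}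
            (fun ω' => gE (C ω') * ∏ i ∈ Finset.range n, gE (Cs i ω')) ω ∂P
          = ENNReal.ofReal (G0 * E) * P {ω' | M ω' = n + 1} * (ENNReal.ofReal G0) ^ n := by
      intro n
      have h1 : (1 : ℕ) ∉ (Finset.range n).image (· + 2) := by simp
      have h0 : (0 : ℕ) ∉ insert 1 ((Finset.range n).image (· + 2)) := by simp
      have hinj : ∀ a ∈ Finset.range n, ∀ b ∈ Finset.range n, a + 2 = b + 2 → a = b := by
        intro a _ b _ h; omega
      have hptwise : ∀ ω, Set.indicator {ω' | M ω' = n + 1}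
            (fun ω' => gE (C ω') * ∏ i ∈ Finset.range n, gE (Cs i ω')) ω
          = ∏ j ∈ insert 0 (insert 1 ((Finset.range n).image (· + 2))), g n j (X j ω) := by
        intro ω
        rw [Finset.prod_insert h0, Finset.prod_insert h1, Finset.prod_image hinj]
        have e0 : g n 0 (X 0 ω) = gE (C ω) := by simp [hgdef, hXdef]
        have e1 : g n 1 (X 1 ω) = gI (n + 1) ((M ω : ℝ)) := by simp [hgdef, hXdef]
        have e2 : ∀ i ∈ Finset.range n, g n (i + 2) (X (i + 2) ω) = gE (Cs i ω) := by
          intro i _; simp [hgdef, hXdef]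
        rw [e0, e1, Finset.prod_congr rfl e2]
        by_cases h : M ω = n + 1
        · rw [Set.indicator_of_mem (show ω ∈ {ω' | M ω' = n + 1} from h)]
          have : gI (n + 1) ((M ω : ℝ)) = 1 := by
            rw [hgIdef]; exact Set.indicator_of_mem (by simp only [Set.mem_singleton_iff]; exact_mod_cast h) _
          rw [this, one_mul]
        · rw [Set.indicator_of_notMem (show ω ∉ {ω' | M ω' = n + 1} from h)]
          have : gI (n + 1) ((M ω : ℝ)) = 0 := by
            rw [hgIdef]; exact Set.indicator_of_notMem (by simp only [Set.mem_singleton_iff]; exact_mod_cast h) _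
          rw [this, zero_mul, mul_zero]
      simp_rw [hptwise]
      rw [lintegral_prod_of_iIndepFun' hXmeas hindep (g n) (hgm n)]
      rw [Finset.prod_insert h0, Finset.prod_insert h1, Finset.prod_image hinj]
      have f0 : ∫⁻ ω, g n 0 (X 0 ω) ∂P = ENNReal.ofReal (G0 * E) := by
        have : ∀ ω, g n 0 (X 0 ω) = gE (C ω) := by intro ω; simp [hgdef, hXdef]
        simp_rw [this]; exact hCInt
      have f1 : ∫⁻ ω, g n 1 (X 1 ω) ∂P = P {ω' | M ω' = n + 1} := by
        have : ∀ ω, g n 1 (X 1 ω) = gI (n + 1) ((M ω : ℝ)) := by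
          intro ω; simp [hgdef, hXdef]
        simp_rw [this]; exact hIInt n
      have f2 : ∀ i ∈ Finset.range n,
          ∫⁻ ω, g n (i + 2) (X (i + 2) ω) ∂P = ENNReal.ofReal G0 := by
        intro i _
        have : ∀ ω, g n (i + 2) (X (i + 2) ω) = gE (Cs i ω) := by
          intro ω; simp [hgdef, hXdef]
        simp_rw [this]; exact hCsInt i
      rw [f0, f1, Finset.prod_congr rfl f2, Finset.prod_const, Finset.card_range]
      ring
    -- decompose the LHS
    have hLpt : ∀ ω, ENNReal.ofReal (Real.exp (s *
          (C ω + if 1 < M ω then ∑ i ∈ Finset.range (M ω - 1), Cs i ω else 0)))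
        = ∑' n : ℕ, Set.indicator {ω' | M ω' = n + 1}
            (fun ω' => gE (C ω') * ∏ i ∈ Finset.range n, gE (Cs i ω')) ω := by
      intro ω
      have hif : (if 1 < M ω then ∑ i ∈ Finset.range (M ω - 1), Cs i ω else 0)
          = ∑ i ∈ Finset.range (M ω - 1), Cs i ω := by
        split_ifs with h
        · rfl
        · have h1 : M ω = 1 := le_antisymm (not_lt.mp h) (hMpos ω)
          simp [h1]
      rw [hif]
      have hval : ENNReal.ofReal (Real.exp (s * (C ω + ∑ i ∈ Finset.range (M ω - 1), Cs i ω)))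
          = gE (C ω) * ∏ i ∈ Finset.range (M ω - 1), gE (Cs i ω) := by
        rw [hgEdef]
        dsimp only
        rw [mul_add, Real.exp_add, Finset.mul_sum, Real.exp_sum,
          ENNReal.ofReal_mul (Real.exp_nonneg _),
          ENNReal.ofReal_prod_of_nonneg (fun i _ => Real.exp_nonneg _)]
      rw [tsum_eq_single (M ω - 1) ?_]
      · rw [Set.indicator_of_mem (show ω ∈ {ω' | M ω' = (M ω - 1) + 1} by
          have := hMpos ω; simp only [Set.mem_setOf_eq]; omega)]
        exact hval
      · intro n hn
        apply Set.indicator_of_notMem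
        intro hmem
        simp only [Set.mem_setOf_eq] at hmem
        exact hn (by omega)
    have hLmeas : ∀ n : ℕ, Measurable fun ω => Set.indicator {ω' | M ω' = n + 1}
        (fun ω' => gE (C ω') * ∏ i ∈ Finset.range n, gE (Cs i ω')) ω := by
      intro n
      exact Measurable.indicator
        ((hgEm.comp hCmeas).mul
          (Finset.measurable_prod _ fun i _ => hgEm.comp (hCsmeas i))) (hMset n)
    have hL : ∫⁻ ω, ENNReal.ofReal (Real.exp (s *
          (C ω + if 1 < M ω then ∑ i ∈ Finset.range (M ω - 1), Cs i ω else 0))) ∂P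
        = ∑' n : ℕ, ENNReal.ofReal (G0 * E) * P {ω' | M ω' = n + 1}
            * (ENNReal.ofReal G0) ^ n := by
      rw [lintegral_congr hLpt, lintegral_tsum (fun n => (hLmeas n).aemeasurable)]
      exact tsum_congr key
    -- decompose the RHS
    have hRpt : ∀ ω, ENNReal.ofReal (Real.exp (Real.log G0 * (M ω : ℝ)))
        = ∑' n : ℕ, Set.indicator {ω' | M ω' = n + 1}
            (fun _ => ENNReal.ofReal (G0 ^ (n + 1))) ω := by
      intro ω
      rw [tsum_eq_single (M ω - 1) ?_]
      · rw [Set.indicator_of_mem (show ω ∈ {ω' | M ω' = (M ω - 1) + 1} by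
          have := hMpos ω; simp only [Set.mem_setOf_eq]; omega)]
        congr 1
        rw [mul_comm, Real.exp_nat_mul, Real.exp_log hG0pos]
        congr 1
        have := hMpos ω; omega
      · intro n hn
        apply Set.indicator_of_notMem
        intro hmem
        simp only [Set.mem_setOf_eq] at hmem
        exact hn (by omega)
    have hR : ∫⁻ ω, ENNReal.ofReal (Real.exp (Real.log G0 * (M ω : ℝ))) ∂P
        = ∑' n : ℕ, ENNReal.ofReal (G0 ^ (n + 1)) * P {ω' | M ω' = n + 1} := by
      rw [lintegral_congr hRpt, lintegral_tsum
        (fun n => (measurable_const.indicator (hMset n)).aemeasurable)]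
      refine tsum_congr fun n => ?_
      rw [lintegral_indicator (hMset n), setLIntegral_const]
    rw [hL, hR, ← ENNReal.tsum_mul_right]
    refine tsum_congr fun n => ?_
    rw [ENNReal.ofReal_mul hG0pos.le,
      show ENNReal.ofReal (G0 ^ (n + 1)) = ENNReal.ofReal G0 ^ (n + 1) from
        ENNReal.ofReal_pow hG0pos.le _, pow_succ]
    ring
  · -- case s > s*
    intro s hs
    have hs0 : 0 < s := lt_of_le_of_lt (by unfold sStar; positivity) hs
    rw [eq_top_iff, ← hC_mgf_gt s hs]
    apply lintegral_mono
    intro ω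
    apply ENNReal.ofReal_le_ofReal
    apply Real.exp_le_exp.mpr
    have hsum : 0 ≤ (if 1 < M ω then ∑ i ∈ Finset.range (M ω - 1), Cs i ω else 0) := by
      split_ifs
      · exact Finset.sum_nonneg fun i _ => hCs_nonneg i ω
      · exact le_refl 0
    exact mul_le_mul_of_nonneg_left (le_add_of_nonneg_right hsum) hs0.le
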